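/- Let T ⊆ ℝ² be the unit triangle with vertices (0,0), (1,0), (0,1). For f ∈ C²(T) define T(f) := (1/24)(f(0,0)+f(0,1)+f(1,0)) + (3/8)·f(1/3,1/3). Then |∬_T f(x,y) dx dy − T(f)| ≤ (1/18)·‖d²f‖_∞. -/

import Mathlib

open MeasureTheory

noncomputable def d2normSup {n : ℕ} (S : Set (EuclideanSpace ℝ (Fin n)))
    (f : EuclideanSpace ℝ (Fin n) → ℝ) : ℝ :=
  sSup {r : ℝ | ∃ u ∈ S, ∃ v : EuclideanSpace ℝ (Fin n), ‖v‖ = 1 ∧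
    r = |iteratedFDeriv ℝ 2 f u ![v, v]|}



namespace TriCubAux

noncomputable def em : EuclideanSpace ℝ (Fin 2) ≃ᵐ ℝ × ℝ :=
  (MeasurableEquiv.toLp 2 (Fin 2 → ℝ)).symm.trans (MeasurableEquiv.piFinTwo fun _ => ℝ)

lemma em_apply (u : EuclideanSpace ℝ (Fin 2)) : em u = (u 0, u 1) := rfl

lemma em_mp : MeasurePreserving em := by
  have h := (volume_preserving_piFinTwo fun _ : Fin 2 => ℝ).comp
    (EuclideanSpace.volume_preserving_symm_measurableEquiv_toLp (Fin 2))
  exact h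

def T' : Set (ℝ × ℝ) := {p | 0 ≤ p.1 ∧ 0 ≤ p.2 ∧ p.1 + p.2 ≤ 1}

def TS : Set (EuclideanSpace ℝ (Fin 2)) := {u | 0 ≤ u 0 ∧ 0 ≤ u 1 ∧ u 0 + u 1 ≤ 1}

lemma preim : em ⁻¹' T' = TS := rfl

lemma transfer (F : ℝ × ℝ → ℝ) : ∫ u in TS, F (em u) = ∫ p in T', F p := by
  rw [← preim]
  exact em_mp.setIntegral_preimage_emb em.measurableEmbedding F T'

lemma icube (a b c d u : ℝ) (hu : 0 ≤ u) :
    ∫ y in Set.Icc (0:ℝ) u, (a + b*y + c*y^2 + d*y^3) =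
      a*u + b*u^2/2 + c*u^3/3 + d*u^4/4 := by
  rw [MeasureTheory.integral_Icc_eq_integral_Ioc, ← intervalIntegral.integral_of_le hu]
  have h1 : IntervalIntegrable (fun y : ℝ => a + b*y) volume 0 u :=
    Continuous.intervalIntegrable (by continuity) 0 u
  have h2 : IntervalIntegrable (fun y : ℝ => c*y^2) volume 0 u :=
    Continuous.intervalIntegrable (by continuity) 0 u
  have h3 : IntervalIntegrable (fun y : ℝ => d*y^3) volume 0 u :=
    Continuous.intervalIntegrable (by continuity) 0 u
  have hc : IntervalIntegrable (fun y : ℝ => b*y) volume 0 u :=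
    Continuous.intervalIntegrable (by continuity) 0 u
  rw [show (fun y : ℝ => a + b*y + c*y^2 + d*y^3)
      = fun y : ℝ => ((a + b*y) + c*y^2) + d*y^3 from rfl]
  rw [intervalIntegral.integral_add (h1.add h2) h3, intervalIntegral.integral_add h1 h2,
    intervalIntegral.integral_add (intervalIntegrable_const) hc]
  rw [intervalIntegral.integral_const_mul, intervalIntegral.integral_const_mul,
    intervalIntegral.integral_const_mul, integral_pow, integral_pow, integral_id,
    intervalIntegral.integral_const]
  simp
  ring

lemma fub (F : ℝ × ℝ → ℝ) (hF : Continuous F) :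
    ∫ p in T', F p = ∫ x in Set.Icc (0:ℝ) 1, ∫ y in Set.Icc (0:ℝ) (1 - x), F (x, y) := by
  have hcl : IsClosed T' := by
    have h1 : IsClosed {p : ℝ×ℝ | 0 ≤ p.1} := isClosed_le continuous_const continuous_fst
    have h2 : IsClosed {p : ℝ×ℝ | 0 ≤ p.2} := isClosed_le continuous_const continuous_snd
    have h3 : IsClosed {p : ℝ×ℝ | p.1 + p.2 ≤ 1} :=
      isClosed_le (continuous_fst.add continuous_snd) continuous_const
    exact h1.inter (h2.inter h3)
  have hm : MeasurableSet T' := hcl.measurableSet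
  have hcomp : IsCompact T' := by
    refine (isCompact_Icc (a := ((0:ℝ),(0:ℝ))) (b := ((1:ℝ),(1:ℝ)))).of_isClosed_subset hcl ?_
    rintro ⟨x, y⟩ ⟨hx, hy, hxy⟩
    dsimp at hx hy hxy
    exact ⟨⟨hx, hy⟩, ⟨by dsimp; linarith, by dsimp; linarith⟩⟩
  have hint : IntegrableOn F T' := hF.continuousOn.integrableOn_compact hcomp
  have hind : Integrable (T'.indicator F) ((volume : Measure ℝ).prod volume) := by
    rw [← Measure.volume_eq_prod ℝ ℝ]
    exact (integrable_indicator_iff hm).2 hint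
  rw [← integral_indicator hm, Measure.volume_eq_prod ℝ ℝ, integral_prod _ hind]
  have key : ∀ x : ℝ, (∫ y, T'.indicator F (x, y)) =
      (Set.Icc (0:ℝ) 1).indicator (fun x => ∫ y in Set.Icc (0:ℝ) (1-x), F (x,y)) x := by
    intro x
    by_cases hx : x ∈ Set.Icc (0:ℝ) 1
    · rw [Set.indicator_of_mem hx]
      have hpt : ∀ y, T'.indicator F (x, y)
          = (Set.Icc (0:ℝ) (1-x)).indicator (fun y => F (x,y)) y := by
        intro y
        by_cases hy : y ∈ Set.Icc (0:ℝ) (1-x)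
        · rw [Set.indicator_of_mem hy, Set.indicator_of_mem]
          exact ⟨hx.1, hy.1, by have := hy.2; dsimp; linarith⟩
        · rw [Set.indicator_of_notMem hy, Set.indicator_of_notMem]
          intro hmem
          exact hy ⟨hmem.2.1, by have := hmem.2.2; dsimp at this ⊢; linarith⟩
      simp_rw [hpt]
      rw [integral_indicator measurableSet_Icc]
    · rw [Set.indicator_of_notMem hx]
      have hpt : ∀ y, T'.indicator F (x, y) = 0 := by
        intro y
        apply Set.indicator_of_notMem
        intro hmem
        obtain ⟨h1, h2, h3⟩ := hmem
        dsimp at h1 h2 h3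
        exact hx ⟨h1, by linarith⟩
      simp [hpt]
  simp_rw [key]
  rw [integral_indicator measurableSet_Icc]

lemma compute_poly (a b c d e : ℝ) :
    ∫ p in T', (a + b*p.1 + c*p.2 + d*p.1^2 + e*p.2^2) =
      a/2 + b/6 + c/6 + d/12 + e/12 := by
  rw [fub _ (by continuity)]
  rw [setIntegral_congr_fun measurableSet_Icc
    (g := fun x : ℝ => (a + c/2 + e/3) + ((b-a) - c - e)*x + ((d-b) + c/2 + e)*x^2
      + (-d - e/3)*x^3) ?_]
  · rw [icube _ _ _ _ _ zero_le_one]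
    ring
  · intro x hx
    dsimp only
    have h : (fun y : ℝ => a + b*x + c*y + d*x^2 + e*y^2)
        = fun y : ℝ => (a + b*x + d*x^2) + c*y + e*y^2 + 0*y^3 := by
      funext y; ring
    rw [h, icube _ _ _ _ _ (by rcases hx with ⟨h1, h2⟩; linarith)]
    ring


lemma taylor_bound {E : Type*} [NormedAddCommGroup E] [NormedSpace ℝ E]
    {f : E → ℝ} (hf : ContDiff ℝ 2 f) (w u : E) (C : ℝ)
    (hC : ∀ t ∈ Set.Icc (0:ℝ) 1,
      |fderiv ℝ (fderiv ℝ f) (w + t • (u - w)) (u - w) (u - w)| ≤ C) :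
    |f u - f w - fderiv ℝ f w (u - w)| ≤ C / 2 := by
  set h : E := u - w with hh
  have hdf : Differentiable ℝ f := hf.differentiable (by norm_num)
  have hD : Differentiable ℝ (fderiv ℝ f) :=
    (hf.fderiv_right (m := 1) (by norm_num)).differentiable one_ne_zero
  have hline : ∀ t : ℝ, HasDerivAt (fun t : ℝ => w + t • h) h t := by
    intro t
    simpa using ((hasDerivAt_id t).smul_const h).const_add w
  set g : ℝ → ℝ := fun t => f (w + t • h) with hg
  set g' : ℝ → ℝ := fun t => fderiv ℝ f (w + t • h) h with hg'
  set g'' : ℝ → ℝ := fun t => fderiv ℝ (fderiv ℝ f) (w + t • h) h h with hg''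
  have hgd : ∀ t, HasDerivAt g (g' t) t := fun t =>
    (hdf (w + t • h)).hasFDerivAt.comp_hasDerivAt t (hline t)
  have hgd' : ∀ t, HasDerivAt g' (g'' t) t := by
    intro t
    have h1 : HasDerivAt (fun t : ℝ => fderiv ℝ f (w + t • h))
        (fderiv ℝ (fderiv ℝ f) (w + t • h) h) t :=
      (hD (w + t • h)).hasFDerivAt.comp_hasDerivAt t (hline t)
    have h2 := ((ContinuousLinearMap.apply ℝ ℝ h).hasFDerivAt).comp_hasDerivAt t h1
    exact h2
  set A : ℝ := g 1 - g 0 - g' 0 with hA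
  set P : ℝ → ℝ := fun t => g t - g 0 - t * g' 0 - t^2 * A with hP
  have hPd : ∀ t, HasDerivAt P (g' t - g' 0 - 2 * t * A) t := by
    intro t
    have h1 := (((hgd t).sub_const (g 0)).sub ((hasDerivAt_id t).mul_const (g' 0))).sub
      ((hasDerivAt_pow 2 t).mul_const A)
    refine h1.congr_deriv ?_
    push_cast
    ring
  have hPc : Continuous P := by
    have : Differentiable ℝ P := fun t => (hPd t).differentiableAt
    exact this.continuous
  have hP0 : P 0 = 0 := by simp [hP]
  have hP1 : P 1 = 0 := by simp [hP, hA]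
  obtain ⟨c, hc, hc0⟩ := exists_hasDerivAt_eq_zero one_pos hPc.continuousOn
    (hP0.trans hP1.symm) (fun x _ => hPd x)
  set Q : ℝ → ℝ := fun t => g' t - g' 0 - 2 * t * A with hQ
  have hQd : ∀ t, HasDerivAt Q (g'' t - 2 * A) t := by
    intro t
    have h1 := ((hgd' t).sub_const (g' 0)).sub (((hasDerivAt_id t).const_mul 2).mul_const A)
    refine h1.congr_deriv ?_
    ring
  have hQc : Continuous Q := by
    have : Differentiable ℝ Q := fun t => (hQd t).differentiableAt
    exact this.continuous
  have hQ0 : Q 0 = 0 := by simp [hQ]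
  have hQcc : Q c = 0 := hc0
  obtain ⟨ξ, hξ, hξ0⟩ := exists_hasDerivAt_eq_zero hc.1 hQc.continuousOn
    (hQ0.trans hQcc.symm) (fun x _ => hQd x)
  have hξ1 : ξ ∈ Set.Icc (0:ℝ) 1 := ⟨hξ.1.le, hξ.2.le.trans hc.2.le⟩
  have hbound : |g'' ξ| ≤ C := hC ξ hξ1
  have hgA : g'' ξ = 2 * A := by
    have := hξ0
    linarith [sub_eq_zero.mp this]
  have hgu : g 1 = f u := by simp [hg, hh]
  have hg0 : g 0 = f w := by simp [hg]
  have hg'0 : g' 0 = fderiv ℝ f w h := by simp [hg']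
  have hfinal : f u - f w - fderiv ℝ f w h = A := by rw [hA, hgu, hg0, hg'0]
  rw [hfinal]
  rw [hgA, abs_mul] at hbound
  have : |(2:ℝ)| = 2 := by norm_num
  rw [this] at hbound
  linarith [abs_nonneg A]

lemma normsq (x : EuclideanSpace ℝ (Fin 2)) : ‖x‖^2 = (x 0)^2 + (x 1)^2 := by
  have h : ‖x‖ = Real.sqrt ((x 0)^2 + (x 1)^2) := by
    rw [EuclideanSpace.norm_eq]
    simp [Fin.sum_univ_two, Real.norm_eq_abs, sq_abs]
  rw [h, Real.sq_sqrt (by positivity)]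

end TriCubAux

set_option maxHeartbeats 2000000 in
open TriCubAux in
theorem triangle_cubature_error
    (v00 v10 v01 w : EuclideanSpace ℝ (Fin 2))
    (hv00 : v00 0 = 0 ∧ v00 1 = 0) (hv10 : v10 0 = 1 ∧ v10 1 = 0)
    (hv01 : v01 0 = 0 ∧ v01 1 = 1) (hw : w 0 = 1 / 3 ∧ w 1 = 1 / 3)
    (T : Set (EuclideanSpace ℝ (Fin 2))) (hT : T = convexHull ℝ {v00, v10, v01})
    (f : EuclideanSpace ℝ (Fin 2) → ℝ) (hf : ContDiff ℝ 2 f) :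
    |(∫ x in T, f x) -
        (1 / 24 * (f v00 + f v01 + f v10) + 3 / 8 * f w)| ≤
      1 / 18 * d2normSup T f := by
  obtain ⟨h000, h001⟩ := hv00
  obtain ⟨h100, h101⟩ := hv10
  obtain ⟨h010, h011⟩ := hv01
  obtain ⟨hw0, hw1⟩ := hw
  -- T equals the coordinate description
  have hTT : T = TS := by
    rw [hT]
    apply Set.Subset.antisymm
    · apply convexHull_min
      · rintro x (rfl | rfl | rfl)
        · exact ⟨by rw [h000], by rw [h001], by rw [h000, h001]; norm_num⟩
        · exact ⟨by rw [h100]; norm_num, by rw [h101], by rw [h100, h101]; norm_num⟩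
        · exact ⟨by rw [h010], by rw [h011]; norm_num, by rw [h010, h011]; norm_num⟩
      · rintro x ⟨hx0, hx1, hx2⟩ y ⟨hy0, hy1, hy2⟩ a b ha hb hab
        refine ⟨?_, ?_, ?_⟩ <;>
          simp only [TS, Set.mem_setOf_eq, PiLp.add_apply, PiLp.smul_apply, smul_eq_mul] <;>
          nlinarith
    · intro u hu
      obtain ⟨hu0, hu1, hu2⟩ := hu
      have hrep : u = (1 - u 0 - u 1) • v00 + (u 0) • v10 + (u 1) • v01 := by
        ext i
        fin_cases i <;>
          simp [PiLp.add_apply, PiLp.smul_apply, smul_eq_mul, h000, h001, h100, h101,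
            h010, h011]
      rw [hrep]
      have hch := convex_convexHull ℝ ({v00, v10, v01} : Set (EuclideanSpace ℝ (Fin 2)))
      have hsum := hch.sum_mem (t := (Finset.univ : Finset (Fin 3)))
        (w := ![1 - u 0 - u 1, u 0, u 1]) (z := ![v00, v10, v01])
        (by intro i _; fin_cases i <;> simp <;> linarith)
        (by simp [Fin.sum_univ_three]; ring)
        (by
          intro i _
          fin_cases i
          · exact subset_convexHull ℝ _ (by simp)
          · exact subset_convexHull ℝ _ (by simp)
          · exact subset_convexHull ℝ _ (by simp))
      simpa [Fin.sum_univ_three] using hsum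
  -- compactness and measurability
  have hfin : ({v00, v10, v01} : Set (EuclideanSpace ℝ (Fin 2))).Finite := by
    exact (Set.finite_singleton v01).insert v10 |>.insert v00
  have hcomp : IsCompact T := by rw [hT]; exact hfin.isCompact_convexHull ℝ
  have hmeas : MeasurableSet T := hcomp.isClosed.measurableSet
  -- the sup set
  set S : Set ℝ := {r : ℝ | ∃ u ∈ T, ∃ v : EuclideanSpace ℝ (Fin 2), ‖v‖ = 1 ∧
    r = |iteratedFDeriv ℝ 2 f u ![v, v]|} with hS
  have hMdef : d2normSup T f = sSup S := rfl
  set M : ℝ := sSup S with hM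
  have hbddS : BddAbove S := by
    obtain ⟨Cb, hCb⟩ := hcomp.exists_bound_of_continuousOn
      ((hf.continuous_iteratedFDeriv (le_refl 2)).continuousOn)
    refine ⟨Cb, ?_⟩
    rintro r ⟨u, hu, v, hv, rfl⟩
    have h1 : |iteratedFDeriv ℝ 2 f u ![v, v]| = ‖iteratedFDeriv ℝ 2 f u ![v, v]‖ :=
      (Real.norm_eq_abs _).symm
    have h2 := (iteratedFDeriv ℝ 2 f u).le_opNorm ![v, v]
    have h3 : (∏ i : Fin 2, ‖(![v, v] : Fin 2 → EuclideanSpace ℝ (Fin 2)) i‖) = 1 := by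
      simp [Fin.prod_univ_two, hv]
    rw [h1]
    calc ‖iteratedFDeriv ℝ 2 f u ![v, v]‖ ≤ ‖iteratedFDeriv ℝ 2 f u‖ * 1 := by
          rw [← h3]; exact h2
      _ ≤ Cb := by rw [mul_one]; exact hCb u hu
  have hv10norm : ‖v10‖ = 1 := by
    have := normsq v10
    rw [h100, h101] at this
    nlinarith [norm_nonneg v10]
  have hwT : w ∈ T := by
    rw [hTT]; exact ⟨by rw [hw0]; norm_num, by rw [hw1]; norm_num, by rw [hw0, hw1]; norm_num⟩
  have hMnn : 0 ≤ M := by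
    have hmem : |iteratedFDeriv ℝ 2 f w ![v10, v10]| ∈ S := ⟨w, hwT, v10, hv10norm, rfl⟩
    exact le_trans (abs_nonneg _) (le_csSup hbddS hmem)
  -- pointwise bound on the bilinear form
  have hptbound : ∀ x ∈ T, ∀ v : EuclideanSpace ℝ (Fin 2),
      |fderiv ℝ (fderiv ℝ f) x v v| ≤ M * ‖v‖^2 := by
    intro x hx v
    by_cases hv : v = 0
    · simp [hv]
    · set vu : EuclideanSpace ℝ (Fin 2) := ‖v‖⁻¹ • v with hvu
      have hvun : ‖vu‖ = 1 := by
        rw [hvu, norm_smul, norm_inv, norm_norm, inv_mul_cancel₀ (norm_ne_zero_iff.2 hv)]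
      have hmem : |iteratedFDeriv ℝ 2 f x ![vu, vu]| ∈ S := ⟨x, hx, vu, hvun, rfl⟩
      have h1 : |iteratedFDeriv ℝ 2 f x ![vu, vu]| ≤ M := le_csSup hbddS hmem
      have h2 : iteratedFDeriv ℝ 2 f x ![vu, vu] = fderiv ℝ (fderiv ℝ f) x vu vu := by
        rw [iteratedFDeriv_two_apply]
        simp
      have hvrep : v = ‖v‖ • vu := (smul_inv_smul₀ (norm_ne_zero_iff.2 hv) v).symm
      have h3 : fderiv ℝ (fderiv ℝ f) x v v = ‖v‖^2 * (fderiv ℝ (fderiv ℝ f) x vu vu) := by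
        conv_lhs => rw [hvrep]
        simp only [ContinuousLinearMap.map_smul, ContinuousLinearMap.smul_apply, smul_eq_mul]
        ring
      rw [h3, abs_mul, abs_of_nonneg (by positivity : (0:ℝ) ≤ ‖v‖^2)]
      rw [h2] at h1
      nlinarith [sq_nonneg ‖v‖, abs_nonneg (fderiv ℝ (fderiv ℝ f) x vu vu)]
  -- segment stays in T
  have hseg : ∀ u ∈ T, ∀ t ∈ Set.Icc (0:ℝ) 1, w + t • (u - w) ∈ T := by
    intro u hu t ht
    rw [hTT] at hu ⊢
    obtain ⟨hu0, hu1, hu2⟩ := hu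
    obtain ⟨ht0, ht1⟩ := ht
    refine ⟨?_, ?_, ?_⟩ <;>
      simp only [TS, Set.mem_setOf_eq, PiLp.add_apply, PiLp.smul_apply, PiLp.sub_apply,
        smul_eq_mul, hw0, hw1] <;>
      nlinarith [mul_nonneg ht0 hu0, mul_nonneg ht0 hu1,
        mul_nonneg ht0 (sub_nonneg.2 hu2)]
  set L : EuclideanSpace ℝ (Fin 2) →L[ℝ] ℝ := fderiv ℝ f w with hL
  set R : EuclideanSpace ℝ (Fin 2) → ℝ := fun u => f u - (f w + L (u - w)) with hR
  -- Taylor bound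
  have hRle : ∀ u ∈ T, |R u| ≤ M * ‖u - w‖^2 / 2 := by
    intro u hu
    have := taylor_bound hf w u (M * ‖u - w‖^2) (fun t ht => by
      calc |fderiv ℝ (fderiv ℝ f) (w + t • (u - w)) (u - w) (u - w)|
          ≤ M * ‖u - w‖^2 := hptbound _ (hseg u hu t ht) (u - w))
    have heq : R u = f u - f w - fderiv ℝ f w (u - w) := by rw [hR, hL]; ring
    rw [heq]
    linarith
  -- integral computations
  have hMS : MeasurableSet TS := by rw [← hTT]; exact hmeas
  have key1 : ∫ u in TS, (f w + L (u - w)) = f w / 2 := by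
    have e1 : ∀ u : EuclideanSpace ℝ (Fin 2), f w + L (u - w)
        = (f w - L v10/3 - L v01/3) + (L v10)*(em u).1 + (L v01)*(em u).2
          + 0*(em u).1^2 + 0*(em u).2^2 := by
      intro u
      rw [em_apply]
      have hvec : u - w = (u 0 - 1/3) • v10 + (u 1 - 1/3) • v01 := by
        ext i
        fin_cases i <;>
          simp [PiLp.sub_apply, PiLp.add_apply, PiLp.smul_apply, smul_eq_mul,
            h100, h101, h010, h011, hw0, hw1]
      rw [hvec, map_add, L.map_smul, L.map_smul]
      dsimp
      ring
    calc ∫ u in TS, (f w + L (u - w))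
        = ∫ u in TS, ((fun p : ℝ × ℝ => (f w - L v10/3 - L v01/3) + (L v10)*p.1
            + (L v01)*p.2 + 0*p.1^2 + 0*p.2^2) (em u)) := by
          apply integral_congr_ae
          filter_upwards with u
          exact e1 u
      _ = f w / 2 := (transfer _).trans ((compute_poly _ _ _ _ _).trans (by ring))
  have key2 : ∫ u in TS, ‖u - w‖^2 = 1/18 := by
    have e2 : ∀ u : EuclideanSpace ℝ (Fin 2), ‖u - w‖^2
        = 2/9 + (-(2:ℝ)/3)*(em u).1 + (-(2:ℝ)/3)*(em u).2 + 1*(em u).1^2 + 1*(em u).2^2 := by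
      intro u
      rw [em_apply, normsq]
      simp only [PiLp.sub_apply, hw0, hw1]
      ring
    calc ∫ u in TS, ‖u - w‖^2
        = ∫ u in TS, ((fun p : ℝ × ℝ => 2/9 + (-(2:ℝ)/3)*p.1 + (-(2:ℝ)/3)*p.2
            + 1*p.1^2 + 1*p.2^2) (em u)) := by
          apply integral_congr_ae
          filter_upwards with u
          exact e2 u
      _ = 1/18 := (transfer _).trans ((compute_poly _ _ _ _ _).trans (by norm_num))
  have key1' : ∫ u in T, (f w + L (u - w)) = f w / 2 := by rw [hTT]; exact key1
  have key2' : ∫ u in T, ‖u - w‖^2 = 1/18 := by rw [hTT]; exact key2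
  -- integrability
  have hLc : Continuous (fun u : EuclideanSpace ℝ (Fin 2) => f w + L (u - w)) :=
    continuous_const.add (L.continuous.comp (continuous_id.sub continuous_const))
  have hfi : IntegrableOn f T := hf.continuous.continuousOn.integrableOn_compact hcomp
  have hphii : IntegrableOn (fun u => f w + L (u - w)) T :=
    hLc.continuousOn.integrableOn_compact hcomp
  have hRi : IntegrableOn R T := hfi.sub hphii
  have hgi : IntegrableOn (fun u : EuclideanSpace ℝ (Fin 2) => M * ‖u - w‖^2 / 2) T :=
    (((continuous_const.mul
      ((continuous_id.sub continuous_const).norm.pow 2)).div_const 2)).continuousOn.integrableOn_compact hcomp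
  -- split the integral
  have hsplit : ∫ u in T, f u = f w / 2 + ∫ u in T, R u := by
    have e3 : ∫ u in T, f u = ∫ u in T, ((f w + L (u - w)) + R u) := by
      apply integral_congr_ae
      filter_upwards with u
      rw [hR]
      ring
    rw [e3, integral_add hphii hRi, key1']
  -- bound the remainder integral
  have h1 : |∫ u in T, R u| ≤ ∫ u in T, |R u| := by
    simpa [Real.norm_eq_abs] using norm_integral_le_integral_norm (μ := volume.restrict T) R
  have h2 : ∫ u in T, |R u| ≤ ∫ u in T, M * ‖u - w‖^2 / 2 :=
    setIntegral_mono_on hRi.abs hgi hmeas (fun x hx => hRle x hx)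
  have h3 : ∫ u in T, M * ‖u - w‖^2 / 2 = M / 36 := by
    have e4 : (fun u : EuclideanSpace ℝ (Fin 2) => M * ‖u - w‖^2 / 2)
        = fun u => (M/2) * ‖u - w‖^2 := by funext u; ring
    rw [e4, integral_const_mul, key2']
    ring
  -- vertex bounds
  have hmem00 : v00 ∈ T := by rw [hT]; exact subset_convexHull ℝ _ (by simp)
  have hmem10 : v10 ∈ T := by rw [hT]; exact subset_convexHull ℝ _ (by simp)
  have hmem01 : v01 ∈ T := by rw [hT]; exact subset_convexHull ℝ _ (by simp)
  have hb00 : |R v00| ≤ M / 9 := by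
    have hx := hRle v00 hmem00
    have hn : ‖v00 - w‖^2 = 2/9 := by
      rw [normsq]
      simp only [PiLp.sub_apply, h000, h001, hw0, hw1]
      norm_num
    rw [hn] at hx
    linarith
  have hb10 : |R v10| ≤ 5 * M / 18 := by
    have hx := hRle v10 hmem10
    have hn : ‖v10 - w‖^2 = 5/9 := by
      rw [normsq]
      simp only [PiLp.sub_apply, h100, h101, hw0, hw1]
      norm_num
    rw [hn] at hx
    linarith
  have hb01 : |R v01| ≤ 5 * M / 18 := by
    have hx := hRle v01 hmem01
    have hn : ‖v01 - w‖^2 = 5/9 := by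
      rw [normsq]
      simp only [PiLp.sub_apply, h010, h011, hw0, hw1]
      norm_num
    rw [hn] at hx
    linarith
  -- linear terms cancel in the cubature rule
  have hLsum : L (v00 - w) + L (v01 - w) + L (v10 - w) = 0 := by
    rw [← map_add, ← map_add]
    have hz : v00 - w + (v01 - w) + (v10 - w) = 0 := by
      ext i
      fin_cases i <;>
        simp [PiLp.sub_apply, PiLp.add_apply, PiLp.zero_apply, h000, h001, h100, h101,
          h010, h011, hw0, hw1] <;> norm_num
    rw [hz, map_zero]
  have hQ : 1 / 24 * (f v00 + f v01 + f v10) + 3 / 8 * f w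
      = f w / 2 + (R v00 + R v01 + R v10) / 24 := by
    have e00 : f v00 = f w + L (v00 - w) + R v00 := by rw [hR]; ring
    have e01 : f v01 = f w + L (v01 - w) + R v01 := by rw [hR]; ring
    have e10 : f v10 = f w + L (v10 - w) + R v10 := by rw [hR]; ring
    rw [e00, e01, e10]
    linear_combination hLsum / 24
  -- final assembly
  rw [hMdef, hsplit, hQ]
  have e5 : f w / 2 + (∫ u in T, R u) - (f w / 2 + (R v00 + R v01 + R v10) / 24)
      = (∫ u in T, R u) - (R v00 + R v01 + R v10) / 24 := by ring
  rw [e5]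
  have hIR : |∫ u in T, R u| ≤ M / 36 := le_trans h1 (le_trans h2 (le_of_eq h3))
  have hsum3 : |R v00 + R v01 + R v10| ≤ M / 9 + 5 * M / 18 + 5 * M / 18 := by
    calc |R v00 + R v01 + R v10| ≤ |R v00 + R v01| + |R v10| := abs_add_le _ _
      _ ≤ |R v00| + |R v01| + |R v10| := by linarith [abs_add_le (R v00) (R v01)]
      _ ≤ _ := by linarith
  have h24 : |(R v00 + R v01 + R v10) / 24| = |R v00 + R v01 + R v10| / 24 := by
    rw [abs_div]
    norm_num
  calc |(∫ u in T, R u) - (R v00 + R v01 + R v10) / 24|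
      ≤ |∫ u in T, R u| + |(R v00 + R v01 + R v10) / 24| := abs_sub _ _
    _ ≤ 1 / 18 * M := by rw [h24]; linarith
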